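/- Let R be a commutative ring and M a semisimple pure-injective R-module. Then M is supplementing: M has a supplement in every module containing it. -/

import Mathlib

universe u v

/-- The radical of a module: the intersection of all maximal submodules. -/
def moduleRad (R : Type u) [Ring R] (M : Type v) [AddCommGroup M] [Module R M] :
    Submodule R M :=
  sInf {m : Submodule R M | IsCoatom m}

section AuxLattice

variable {R : Type u} [Ring R]

/-- Any linear map sends the radical into the radical. -/
theorem map_moduleRad_le {M₁ : Type*} {M₂ : Type*} [AddCommGroup M₁] [Module R M₁]
    [AddCommGroup M₂] [Module R M₂] (φ : M₁ →ₗ[R] M₂) :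
    Submodule.map φ (moduleRad R M₁) ≤ moduleRad R M₂ := by
  refine le_sInf fun m hm => ?_
  rw [Submodule.map_le_iff_le_comap]
  by_cases hr : LinearMap.range φ ≤ m
  · intro x _
    exact hr ⟨x, rfl⟩
  · have hco : IsCoatom (Submodule.comap φ m) := by
      constructor
      · intro htop
        apply hr
        rintro y ⟨x, rfl⟩
        have hx : x ∈ Submodule.comap φ m := htop ▸ Submodule.mem_top
        exact hx
      · intro Q hQ
        obtain ⟨q, hqQ, hqm⟩ := SetLike.exists_of_lt hQ
        have h1 : m ⊔ Submodule.map φ Q = ⊤ := by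
          refine hm.2 _ (lt_of_le_of_ne le_sup_left ?_)
          intro he
          apply hqm
          have h2 : φ q ∈ m ⊔ Submodule.map φ Q :=
            Submodule.mem_sup_right ⟨q, hqQ, rfl⟩
          rw [← he] at h2
          exact h2
        rw [eq_top_iff]
        intro x _
        have hx : φ x ∈ m ⊔ Submodule.map φ Q := h1 ▸ Submodule.mem_top
        obtain ⟨y, hy, z, hz, hsum⟩ := Submodule.mem_sup.mp hx
        obtain ⟨w, hwQ, rfl⟩ := hz
        have hxw : x - w ∈ Submodule.comap φ m := by
          have : φ (x - w) = y := by
            rw [map_sub, ← hsum]; abel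
          simpa [Submodule.mem_comap, this] using hy
        simpa using Q.add_mem (le_of_lt hQ hxw) hwQ
    exact sInf_le hco

/-- The radical of a semisimple module is trivial. -/
theorem moduleRad_eq_bot (M : Type*) [AddCommGroup M] [Module R M] [IsSemisimpleModule R M] :
    moduleRad R M = ⊥ := by
  rw [eq_bot_iff]
  intro x hx
  rw [Submodule.mem_bot]
  by_contra hx0
  have hsp : (Submodule.span R {x}) ≠ ⊥ := by
    simpa [Submodule.span_singleton_eq_bot] using hx0
  obtain ⟨a, ha, hax⟩ : ∃ a, IsAtom a ∧ a ≤ Submodule.span R {x} := by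
    rcases eq_bot_or_exists_atom_le (Submodule.span R {x}) with h | ⟨a, ha, hax⟩
    · exact absurd h hsp
    · exact ⟨a, ha, hax⟩
  obtain ⟨F, hF⟩ := exists_isCompl a
  have hFne : F ≠ ⊤ := by
    intro hFt
    apply ha.1
    have := hF.inf_eq_bot
    rw [hFt, inf_top_eq] at this
    exact this
  have hFcoatom : IsCoatom F := by
    refine ⟨hFne, fun Q hQ => ?_⟩
    rcases eq_or_ne (a ⊓ Q) a with haQ | haQ
    · have haQ' : a ≤ Q := by rw [← haQ]; exact inf_le_right
      rw [eq_top_iff, ← hF.sup_eq_top]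
      exact sup_le haQ' hQ.le
    · have haQbot : a ⊓ Q = ⊥ := ha.2 _ (lt_of_le_of_ne inf_le_left haQ)
      exfalso
      have h3 : (F ⊔ a) ⊓ Q = F ⊔ (a ⊓ Q) := sup_inf_assoc_of_le a hQ.le
      rw [haQbot, sup_bot_eq] at h3
      have h2 : Q = F := by
        rw [← h3, sup_comm, hF.sup_eq_top, top_inf_eq]
      exact hQ.ne' h2
  have hxF : x ∈ F := (Submodule.mem_sInf.mp hx) F hFcoatom
  have haF : a ≤ F := le_trans hax (by rwa [Submodule.span_singleton_le_iff_mem])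
  exact ha.1 (by rw [← hF.inf_eq_bot, inf_eq_left.mpr haF])

end AuxLattice

section AuxAtoms

variable {R : Type u} [Ring R]

/-- The image of an atom is `⊥` or an atom. -/
theorem isAtom_map {M₁ M₂ : Type*} [AddCommGroup M₁] [Module R M₁]
    [AddCommGroup M₂] [Module R M₂] (φ : M₁ →ₗ[R] M₂) {S : Submodule R M₁}
    (hS : IsAtom S) (hne : Submodule.map φ S ≠ ⊥) : IsAtom (Submodule.map φ S) := by
  refine ⟨hne, fun Q hQ => ?_⟩
  by_contra hQ0
  obtain ⟨q, hqQ, hq0⟩ := Submodule.exists_mem_ne_zero_of_ne_bot hQ0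
  obtain ⟨w, hwS, rfl⟩ := hQ.le hqQ
  have hw0 : w ≠ 0 := by rintro rfl; exact hq0 (map_zero φ)
  have h1 : Submodule.comap φ Q ⊓ S ≠ ⊥ := by
    intro hb
    have : w ∈ Submodule.comap φ Q ⊓ S := ⟨hqQ, hwS⟩
    rw [hb, Submodule.mem_bot] at this
    exact hw0 this
  have h2 : Submodule.comap φ Q ⊓ S = S := by
    rcases eq_or_ne (Submodule.comap φ Q ⊓ S) S with h | h
    · exact h
    · exact absurd (hS.2 _ (lt_of_le_of_ne inf_le_right h)) h1
  have h3 : S ≤ Submodule.comap φ Q := by rw [← h2]; exact inf_le_left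
  exact hQ.ne (le_antisymm (Submodule.map_le_iff_le_comap.mpr h3) hQ.le).symm

/-- An atom disjoint from the radical has a complement. -/
theorem exists_isCompl_of_isAtom_disjoint_rad {M : Type*} [AddCommGroup M] [Module R M]
    {S : Submodule R M} (hS : IsAtom S) (hrad : S ⊓ moduleRad R M = ⊥) :
    ∃ W, IsCompl S W := by
  have hnle : ¬ S ≤ moduleRad R M := by
    intro hle
    exact hS.1 (by rw [← hrad, inf_eq_left.mpr hle])
  have hex : ∃ m, IsCoatom m ∧ ¬ S ≤ m := by
    by_contra hcon
    push_neg at hcon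
    exact hnle (le_sInf fun m hm => hcon m hm)
  obtain ⟨m, hm, hSm⟩ := hex
  refine ⟨m, IsCompl.of_eq ?_ ?_⟩
  · rcases eq_or_ne (S ⊓ m) S with h | h
    · exact absurd (by rw [← h]; exact inf_le_right) hSm
    · exact hS.2 _ (lt_of_le_of_ne inf_le_left h)
  · refine hm.2 _ (lt_of_le_of_ne le_sup_right ?_)
    intro he
    exact hSm (by rw [he]; exact le_sup_left)

/-- Finitely many atoms below `St` (with `St` disjoint from the radical) lie inside a
common direct summand contained in `St`. -/
theorem exists_summand_of_atoms {Nm : Type*} [AddCommGroup Nm] [Module R Nm]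
    (St : Submodule R Nm) (hrad : St ⊓ moduleRad R Nm = ⊥)
    (s : Finset (Submodule R Nm)) (hs : ∀ a ∈ s, IsAtom a ∧ a ≤ St) :
    ∃ D C : Submodule R Nm, IsCompl D C ∧ (∀ a ∈ s, a ≤ D) ∧ D ≤ St := by
  classical
  induction s using Finset.induction_on with
  | empty => exact ⟨⊥, ⊤, isCompl_bot_top, by simp, bot_le⟩
  | @insert S s' hSs ih =>
    obtain ⟨D', C', hDC, hD1, hD2⟩ := ih (fun a ha => hs a (Finset.mem_insert_of_mem ha))
    obtain ⟨hSatom, hSSt⟩ := hs S (Finset.mem_insert_self S s')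
    set p' : Nm →ₗ[R] Nm := C'.subtype ∘ₗ C'.projectionOnto D' hDC.symm with hp'
    have hkey : ∀ x : Nm, x - p' x ∈ D' := by
      intro x
      have h : (D'.projectionOnto C' hDC x : Nm) + (C'.projectionOnto D' hDC.symm x : Nm) = x :=
        Submodule.projection_add_projection_eq_self hDC x
      have : x - p' x = ↑(D'.projectionOnto C' hDC x) := by
        exact (eq_sub_of_add_eq h).symm
      rw [this]; exact Submodule.coe_mem _
    have hp'C' : ∀ x : Nm, p' x ∈ C' := fun x => Submodule.coe_mem _
    set S' := Submodule.map p' S with hS'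
    have hS'C' : S' ≤ C' := by
      rintro _ ⟨x, hx, rfl⟩; exact hp'C' x
    have hS'St : S' ≤ St := by
      rintro _ ⟨x, hx, rfl⟩
      have h1 : x - (x - p' x) = p' x := by abel
      rw [← h1]
      exact St.sub_mem (hSSt hx) (hD2 (hkey x))
    rcases eq_or_ne S' ⊥ with hS'bot | hS'ne
    · refine ⟨D', C', hDC, fun a ha => ?_, hD2⟩
      rcases Finset.mem_insert.mp ha with rfl | ha'
      · intro x hx
        have : p' x ∈ S' := ⟨x, hx, rfl⟩
        rw [hS'bot, Submodule.mem_bot] at this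
        have := hkey x
        rwa [‹p' x = 0›, sub_zero] at this
      · exact hD1 a ha'
    · have hS'atom : IsAtom S' := isAtom_map p' hSatom hS'ne
      -- move into the module C'
      set S'c := Submodule.comap C'.subtype S' with hS'c
      have hmapS'c : Submodule.map C'.subtype S'c = S' := by
        rw [hS'c, Submodule.map_comap_subtype, inf_eq_right.mpr hS'C']
      have hsubinj : Function.Injective C'.subtype := Subtype.coe_injective
      have hS'catom : IsAtom S'c := by
        constructor
        · intro hb
          rw [hb, Submodule.map_bot] at hmapS'c
          exact hS'ne hmapS'c.symm
        · intro b hb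
          have h1 : Submodule.map C'.subtype b ≤ S' := by
            rw [← hmapS'c]; exact Submodule.map_mono hb.le
          rcases eq_or_ne (Submodule.map C'.subtype b) S' with h | h
          · exfalso
            apply hb.ne
            have := congrArg (Submodule.comap C'.subtype) h
            rwa [Submodule.comap_map_eq, Submodule.ker_subtype, sup_bot_eq, ← hS'c] at this
          · have hbb := hS'atom.2 _ (lt_of_le_of_ne h1 h)
            have := congrArg (Submodule.comap C'.subtype) hbb
            rwa [Submodule.comap_map_eq, Submodule.ker_subtype, sup_bot_eq,
              Submodule.comap_bot, Submodule.ker_subtype] at this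
      have hS'crad : S'c ⊓ moduleRad R ↥C' = ⊥ := by
        rw [eq_bot_iff]
        rintro x ⟨hx1, hx2⟩
        have h1 : (x : Nm) ∈ S' := hx1
        have h2 : (x : Nm) ∈ moduleRad R Nm := by
          apply map_moduleRad_le C'.subtype
          exact ⟨x, hx2, rfl⟩
        have : (x : Nm) ∈ St ⊓ moduleRad R Nm := ⟨hS'St h1, h2⟩
        rw [hrad, Submodule.mem_bot] at this
        simpa [Submodule.mem_bot] using this
      obtain ⟨mc, hmc⟩ := exists_isCompl_of_isAtom_disjoint_rad hS'catom hS'crad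
      set Cn := Submodule.map C'.subtype mc with hCn
      have hCnC' : Cn ≤ C' := by
        rintro _ ⟨x, hx, rfl⟩; exact Submodule.coe_mem _
      have hsupCn : S' ⊔ Cn = C' := by
        rw [← hmapS'c, hCn, ← Submodule.map_sup, hmc.sup_eq_top, Submodule.map_top,
          Submodule.range_subtype]
      have hinfCn : S' ⊓ Cn = ⊥ := by
        rw [← hmapS'c, hCn, ← Submodule.map_inf _ hsubinj, hmc.inf_eq_bot, Submodule.map_bot]
      refine ⟨D' ⊔ S', Cn, IsCompl.of_eq ?_ ?_, fun a ha => ?_, sup_le hD2 hS'St⟩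
      · -- (D' ⊔ S') ⊓ Cn = ⊥
        have h1 : (S' ⊔ D') ⊓ C' = S' ⊔ (D' ⊓ C') := sup_inf_assoc_of_le D' hS'C'
        rw [hDC.inf_eq_bot, sup_bot_eq] at h1
        have h2 : Cn = C' ⊓ Cn := (inf_eq_right.mpr hCnC').symm
        rw [sup_comm, h2, ← inf_assoc, h1, hinfCn]
      · rw [sup_assoc, hsupCn, hDC.sup_eq_top]
      · rcases Finset.mem_insert.mp ha with rfl | ha'
        · intro x hx
          have h1 : x = (x - p' x) + p' x := by abel
          rw [h1]
          exact Submodule.add_mem _ (Submodule.mem_sup_left (hkey x))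
            (Submodule.mem_sup_right ⟨x, hx, rfl⟩)
        · exact le_trans (hD1 a ha') le_sup_left

end AuxAtoms

section AuxPurity

variable {R : Type u} [CommRing R]

open TensorProduct

/-- A semisimple submodule whose image is disjoint from the radical is a pure submodule. -/
theorem lTensor_injective_of_semisimple_disjoint_rad
    {Q P Nm : Type*} [AddCommGroup Q] [Module R Q] [AddCommGroup P] [Module R P]
    [AddCommGroup Nm] [Module R Nm] [IsSemisimpleModule R P]
    (j : P →ₗ[R] Nm) (hj : Function.Injective j)
    (hrad : LinearMap.range j ⊓ moduleRad R Nm = ⊥) :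
    Function.Injective (LinearMap.lTensor Q j) := by
  classical
  rw [← LinearMap.ker_eq_bot, eq_bot_iff]
  intro x hx
  rw [LinearMap.mem_ker] at hx
  rw [Submodule.mem_bot]
  obtain ⟨F, hFx⟩ := TensorProduct.exists_finset x
  have hatoms : sSup {a : Submodule R P | IsAtom a} = ⊤ := by
    have h := IsSemisimpleModule.sSup_simples_eq_top R P
    simpa only [isSimpleModule_iff_isAtom] using h
  have key : ∀ p : P, ∃ t : Finset (Submodule R P),
      (↑t ⊆ {a : Submodule R P | IsAtom a}) ∧ Submodule.span R {p} ≤ t.sup id :=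
    fun p => (CompleteLattice.isCompactElement_iff_exists_le_sSup_of_le_sSup _ _).mp
      (Submodule.singleton_span_isCompactElement p) _ (by rw [hatoms]; exact le_top)
  choose t ht1 ht2 using key
  set s : Finset (Submodule R Nm) :=
    F.biUnion (fun pr => (t pr.2).image (Submodule.map j)) with hs
  have hkerj : LinearMap.ker j = ⊥ := LinearMap.ker_eq_bot.mpr hj
  have hsprop : ∀ a ∈ s, IsAtom a ∧ a ≤ LinearMap.range j := by
    intro a ha
    rw [hs, Finset.mem_biUnion] at ha
    obtain ⟨pr, hpr, ha⟩ := ha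
    rw [Finset.mem_image] at ha
    obtain ⟨b, hb, rfl⟩ := ha
    have hba : IsAtom b := ht1 pr.2 hb
    constructor
    · refine isAtom_map j hba ?_
      intro hbot
      apply hba.1
      rw [eq_bot_iff]
      intro z hz
      have : j z ∈ Submodule.map j b := ⟨z, hz, rfl⟩
      rw [hbot, Submodule.mem_bot] at this
      rw [Submodule.mem_bot]
      exact hj (by rw [this, map_zero])
    · rintro y ⟨z, hz, rfl⟩
      exact ⟨z, rfl⟩
  obtain ⟨D, C, hDC, hD1, hD2⟩ := exists_summand_of_atoms (LinearMap.range j) hrad s hsprop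
  have hmem : ∀ pr ∈ F, j pr.2 ∈ D := by
    intro pr hpr
    have h2 : pr.2 ∈ (t pr.2).sup id :=
      ht2 pr.2 (Submodule.mem_span_singleton_self _)
    have h3 : Submodule.map j ((t pr.2).sup id) ≤ D := by
      rw [Submodule.map_le_iff_le_comap]
      refine Finset.sup_le fun b hb => ?_
      refine le_trans (Submodule.le_comap_map j b) (Submodule.comap_mono (hD1 _ ?_))
      rw [hs, Finset.mem_biUnion]
      exact ⟨pr, hpr, Finset.mem_image.mpr ⟨b, hb, rfl⟩⟩
    exact h3 ⟨pr.2, h2, rfl⟩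
  set Dp := Submodule.comap j D with hDp
  set y : Q ⊗[R] ↥Dp :=
    F.attach.sum (fun pr => pr.1.1 ⊗ₜ[R] (⟨pr.1.2, hmem pr.1 pr.2⟩ : Dp)) with hy
  have hsub_y : LinearMap.lTensor Q Dp.subtype y = x := by
    rw [hy, map_sum, hFx, ← Finset.sum_attach F (fun pr => pr.1 ⊗ₜ[R] pr.2)]
    rfl
  have hjy : LinearMap.lTensor Q (j ∘ₗ Dp.subtype) y = 0 := by
    rw [LinearMap.lTensor_comp, LinearMap.comp_apply, hsub_y, hx]
  set jD : ↥Dp →ₗ[R] ↥D := LinearMap.codRestrict D (j ∘ₗ Dp.subtype) (fun c => c.2) with hjD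
  have hfact : D.subtype ∘ₗ jD = j ∘ₗ Dp.subtype := rfl
  have hjDbij : Function.Bijective jD := by
    constructor
    · intro a b hab
      have : j a.1 = j b.1 := congrArg Subtype.val hab
      exact Subtype.ext (hj this)
    · rintro ⟨d, hd⟩
      obtain ⟨z, rfl⟩ := hD2 hd
      exact ⟨⟨z, hd⟩, rfl⟩
  have hjDy : LinearMap.lTensor Q jD y = 0 := by
    rw [← hfact, LinearMap.lTensor_comp, LinearMap.comp_apply] at hjy
    have hretr : (D.linearProjOfIsCompl C hDC) ∘ₗ D.subtype = LinearMap.id :=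
      Submodule.linearProjOfIsCompl_comp_subtype hDC
    have h1 : LinearMap.lTensor Q (D.linearProjOfIsCompl C hDC)
        (LinearMap.lTensor Q D.subtype (LinearMap.lTensor Q jD y))
        = LinearMap.lTensor Q jD y := by
      rw [← LinearMap.lTensor_comp_apply, hretr, LinearMap.lTensor_id]
      rfl
    rw [← h1, hjy, map_zero]
  have hy0 : y = 0 := by
    set eD := LinearEquiv.ofBijective jD hjDbij with heD
    have : LinearMap.lTensor Q jD = (LinearEquiv.lTensor Q eD : Q ⊗[R] ↥Dp →ₗ[R] Q ⊗[R] ↥D) := by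
      rw [LinearEquiv.coe_lTensor]; rfl
    have hinj : Function.Injective (LinearMap.lTensor Q jD) := by
      rw [this]
      exact (LinearEquiv.lTensor Q eD).injective
    exact hinj (by rw [hjDy, map_zero])
  rw [← hsub_y, hy0, map_zero]

end AuxPurity

/-- `V` is a Rad-supplement of `U` in the ambient module: `U + V = ⊤` and
`U ⊓ V ≤ Rad V` (viewed inside the ambient module). -/
def IsRadSupplementOf (R : Type u) [Ring R] {N : Type v} [AddCommGroup N] [Module R N]
    (U V : Submodule R N) : Prop :=
  U ⊔ V = ⊤ ∧ U ⊓ V ≤ Submodule.map V.subtype (moduleRad R V)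

/-- `M` is Rad-supplementing: in every module containing it (i.e. every embedding into a
module `N`), its image has a Rad-supplement. -/
def IsRadSupplementing (R : Type u) [Ring R] (M : Type v) [AddCommGroup M] [Module R M] :
    Prop :=
  ∀ (N : ModuleCat.{v} R) (f : M →ₗ[R] N), Function.Injective f →
    ∃ V : Submodule R N, IsRadSupplementOf R (LinearMap.range f) V

/-- `V` is a supplement of `U`: `U + V = ⊤` and `U ⊓ V` is small in `V`. -/
def IsSupplementOf (R : Type u) [Ring R] {N : Type v} [AddCommGroup N] [Module R N]
    (U V : Submodule R N) : Prop :=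
  U ⊔ V = ⊤ ∧ ∀ T : Submodule R N, T ≤ V → (U ⊓ V) ⊔ T = V → T = V

/-- `M` is supplementing: it has a supplement in every module containing it. -/
def IsSupplementing (R : Type u) [Ring R] (M : Type v) [AddCommGroup M] [Module R M] :
    Prop :=
  ∀ (N : ModuleCat.{v} R) (f : M →ₗ[R] N), Function.Injective f →
    ∃ V : Submodule R N, IsSupplementOf R (LinearMap.range f) V

/-- `M` is pure-injective: its image is a direct summand in every pure extension,
where an embedding `f : M → N` is pure if `Q ⊗ f` is injective for every module `Q`. -/
def IsPureInjective (R : Type u) [CommRing R] (M : Type v) [AddCommGroup M]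
    [Module R M] : Prop :=
  ∀ (N : ModuleCat.{v} R) (f : M →ₗ[R] N), Function.Injective f →
    (∀ (Q : ModuleCat.{v} R), Function.Injective (LinearMap.lTensor (Q : Type v) f)) →
    ∃ W : Submodule R N, IsCompl (LinearMap.range f) W

/-- Over a commutative ring, a semisimple pure-injective module is supplementing. -/
theorem isSupplementing_of_semisimple_pureInjective
    (R : Type u) [CommRing R] (M : Type v) [AddCommGroup M] [Module R M]
    [IsSemisimpleModule R M] (h : IsPureInjective R M) :
    IsSupplementing R M := by
  intro N f hf
  classical
  set Nt := (N : Type v) with hNt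
  set A : Submodule R M := Submodule.comap f (moduleRad R Nt) with hA
  obtain ⟨B, hAB⟩ := exists_isCompl A
  set U : Submodule R Nt := LinearMap.range f with hU
  set K : Submodule R Nt := Submodule.map f A with hK
  set M₁ : Submodule R Nt := Submodule.map f B with hM₁def
  have hKrad : K ≤ moduleRad R Nt := Submodule.map_comap_le f _
  have hKU : K ≤ U := by rintro _ ⟨x, hx, rfl⟩; exact ⟨x, rfl⟩
  have hM₁U : M₁ ≤ U := by rintro _ ⟨x, hx, rfl⟩; exact ⟨x, rfl⟩
  have hKM₁sup : K ⊔ M₁ = U := by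
    rw [hK, hM₁def, ← Submodule.map_sup, hAB.sup_eq_top, Submodule.map_top]
  have hKM₁inf : K ⊓ M₁ = ⊥ := by
    rw [hK, hM₁def, ← Submodule.map_inf _ hf, hAB.inf_eq_bot, Submodule.map_bot]
  have hKeq : K = U ⊓ moduleRad R Nt := by
    rw [hK, hA, Submodule.map_comap_eq]
  have hM₁rad : M₁ ⊓ moduleRad R Nt = ⊥ := by
    rw [eq_bot_iff]
    rintro x ⟨hx1, hx2⟩
    have h1 : x ∈ K := by rw [hKeq]; exact ⟨hM₁U hx1, hx2⟩
    have h2 : x ∈ K ⊓ M₁ := ⟨h1, hx1⟩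
    rwa [hKM₁inf] at h2
  set pA : M →ₗ[R] ↥A := A.projectionOnto B hAB with hpA
  set pB : M →ₗ[R] ↥B := B.projectionOnto A hAB.symm with hpB
  set fB : ↥B →ₗ[R] Nt := f ∘ₗ B.subtype with hfB
  have hfBinj : Function.Injective fB := hf.comp Subtype.coe_injective
  have hfBrange : LinearMap.range fB = M₁ := by
    rw [hfB, LinearMap.range_comp, Submodule.range_subtype]
  set g : M →ₗ[R] (Nt × ↥A) := LinearMap.prod (fB ∘ₗ pB) pA with hg
  have hdecomp : ∀ m : M, ((pA m : M) + (pB m : M)) = m :=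
    fun m => Submodule.projection_add_projection_eq_self hAB m
  have hginj : Function.Injective g := by
    rw [← LinearMap.ker_eq_bot, eq_bot_iff]
    intro m hm
    rw [LinearMap.mem_ker] at hm
    have h1 : fB (pB m) = 0 := congrArg Prod.fst hm
    have h2 : pA m = 0 := congrArg Prod.snd hm
    have h3 : pB m = 0 := hfBinj (by rw [h1, map_zero])
    rw [Submodule.mem_bot, ← hdecomp m, h2, h3]
    simp
  have hpure : ∀ (Q : ModuleCat.{v} R),
      Function.Injective (LinearMap.lTensor (Q : Type v) g) := by
    intro Q
    have hpureB := lTensor_injective_of_semisimple_disjoint_rad (Q := (Q : Type v))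
      fB hfBinj (by rw [hfBrange]; exact hM₁rad)
    rw [← LinearMap.ker_eq_bot, eq_bot_iff]
    intro x hx
    rw [LinearMap.mem_ker] at hx
    rw [Submodule.mem_bot]
    have hsnd : LinearMap.lTensor (Q : Type v) pA x = 0 := by
      have hc : (LinearMap.snd R Nt ↥A) ∘ₗ g = pA := by ext m; rfl
      rw [← hc, LinearMap.lTensor_comp, LinearMap.comp_apply, hx, map_zero]
    have hfst : LinearMap.lTensor (Q : Type v) (fB ∘ₗ pB) x = 0 := by
      have hc : (LinearMap.fst R Nt ↥A) ∘ₗ g = fB ∘ₗ pB := by ext m; rfl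
      rw [← hc, LinearMap.lTensor_comp, LinearMap.comp_apply, hx, map_zero]
    have hxB : LinearMap.lTensor (Q : Type v) pB x = 0 := by
      apply hpureB
      rw [map_zero, ← LinearMap.lTensor_comp_apply]
      exact hfst
    have hid : A.subtype ∘ₗ pA + B.subtype ∘ₗ pB = LinearMap.id := by
      ext m
      simpa using hdecomp m
    have hxsum : x = LinearMap.lTensor (Q : Type v) A.subtype
          (LinearMap.lTensor (Q : Type v) pA x)
        + LinearMap.lTensor (Q : Type v) B.subtype
          (LinearMap.lTensor (Q : Type v) pB x) := by
      rw [← LinearMap.lTensor_comp_apply, ← LinearMap.lTensor_comp_apply,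
        ← LinearMap.add_apply, ← LinearMap.lTensor_add, hid, LinearMap.lTensor_id]
      rfl
    rw [hxsum, hsnd, hxB, map_zero, map_zero, add_zero]
  obtain ⟨W, hW⟩ := h (ModuleCat.of R (Nt × ↥A)) g hginj hpure
  have hrg : LinearMap.range g = M₁.prod ⊤ := by
    apply le_antisymm
    · rintro _ ⟨m, rfl⟩
      exact Submodule.mem_prod.mpr ⟨⟨(pB m : M), (pB m).2, rfl⟩, trivial⟩
    · rintro ⟨y, a⟩ hy
      rw [Submodule.mem_prod] at hy
      obtain ⟨b, hb, rfl⟩ := hy.1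
      refine ⟨(a : M) + b, ?_⟩
      have h1 : pB ((a : M) + b) = ⟨b, hb⟩ := by
        rw [map_add, Submodule.projectionOnto_apply_of_mem_right hAB.symm a.2, zero_add]
        exact Submodule.projectionOnto_apply_left hAB.symm ⟨b, hb⟩
      have h2 : pA ((a : M) + b) = a := by
        rw [map_add, Submodule.projectionOnto_apply_left hAB a,
          Submodule.projectionOnto_apply_of_mem_right hAB hb, add_zero]
      show (fB (pB ((a : M) + b)), pA ((a : M) + b)) = (f b, a)
      rw [h1, h2]
      rfl
  set π : (Nt × ↥A) →ₗ[R] Nt := LinearMap.fst R Nt ↥A with hπ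
  set bp : Submodule R (Nt × ↥A) := (⊥ : Submodule R Nt).prod ⊤ with hbp
  set V : Submodule R Nt := Submodule.map π (W ⊔ bp) with hV
  have hπsurj : Function.Surjective π := fun y => ⟨(y, 0), rfl⟩
  have hmapG : Submodule.map π (LinearMap.range g) = M₁ := by
    rw [hrg]
    apply le_antisymm
    · rintro _ ⟨⟨y, a⟩, hy, rfl⟩
      exact (Submodule.mem_prod.mp hy).1
    · intro y hy
      exact ⟨(y, 0), Submodule.mem_prod.mpr ⟨hy, trivial⟩, rfl⟩
  have hsupMV : M₁ ⊔ V = ⊤ := by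
    rw [hV, ← hmapG, ← Submodule.map_sup, ← sup_assoc, hW.sup_eq_top, top_sup_eq,
      Submodule.map_top, LinearMap.range_eq_top.mpr hπsurj]
  have hinfMV : M₁ ⊓ V = ⊥ := by
    rw [eq_bot_iff]
    rintro x ⟨hxM, hxV⟩
    obtain ⟨w, hw, hwx⟩ := hxV
    obtain ⟨w1, hw1, w2, hw2, rfl⟩ := Submodule.mem_sup.mp hw
    have hw2fst : w2.1 = 0 := (Submodule.mem_prod.mp hw2).1
    have hw1fst : w1.1 = x := by
      have h1 : w1.1 + w2.1 = x := hwx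
      rwa [hw2fst, add_zero] at h1
    have hw1G : w1 ∈ LinearMap.range g := by
      rw [hrg]
      exact Submodule.mem_prod.mpr ⟨by rw [hw1fst]; exact hxM, trivial⟩
    have hw1bot : w1 = 0 := by
      have h1 : w1 ∈ LinearMap.range g ⊓ W := ⟨hw1G, hw1⟩
      rwa [hW.inf_eq_bot, Submodule.mem_bot] at h1
    rw [Submodule.mem_bot, ← hw1fst, hw1bot]
    rfl
  have hVcompl : IsCompl M₁ V := IsCompl.of_eq hinfMV hsupMV
  haveI hssM₁ : IsSemisimpleModule R ↥M₁ := by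
    have h1 := IsSemisimpleModule.range fB
    rwa [hfBrange] at h1
  set pM₁ : Nt →ₗ[R] ↥M₁ := M₁.projectionOnto V hVcompl with hpM₁
  set pV : Nt →ₗ[R] ↥V := V.projectionOnto M₁ hVcompl.symm with hpV
  have hdecompN : ∀ x : Nt, ((pM₁ x : Nt) + (pV x : Nt)) = x :=
    fun x => Submodule.projection_add_projection_eq_self hVcompl x
  have hradV : moduleRad R Nt ≤ V := by
    intro x hx
    have h1 : pM₁ x ∈ moduleRad R ↥M₁ := map_moduleRad_le pM₁ ⟨x, hx, rfl⟩
    rw [moduleRad_eq_bot, Submodule.mem_bot] at h1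
    have h2 := hdecompN x
    rw [h1] at h2
    simp only [ZeroMemClass.coe_zero, zero_add] at h2
    rw [← h2]
    exact Submodule.coe_mem _
  have hUV : U ⊓ V = K := by
    apply le_antisymm
    · rintro x ⟨hxU, hxV⟩
      have hxU' : x ∈ K ⊔ M₁ := by rw [hKM₁sup]; exact hxU
      obtain ⟨k, hk, m, hm, rfl⟩ := Submodule.mem_sup.mp hxU'
      have hmV : m ∈ V := by
        have hkV : k ∈ V := hradV (hKrad hk)
        have h1 : (k + m) - k ∈ V := V.sub_mem hxV hkV
        simpa using h1
      have h2 : m ∈ M₁ ⊓ V := ⟨hm, hmV⟩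
      rw [hinfMV, Submodule.mem_bot] at h2
      rw [h2, add_zero]
      exact hk
    · exact le_inf hKU (le_trans hKrad hradV)
  refine ⟨V, ?_, ?_⟩
  · rw [eq_top_iff, ← hsupMV]
    exact sup_le (le_trans hM₁U le_sup_left) le_sup_right
  · intro T hTV hsum
    rw [hUV] at hsum
    set Tc := Submodule.comap V.subtype T with hTc
    set Kc := Submodule.comap V.subtype K with hKc
    have hKV : K ≤ V := le_trans hKrad hradV
    have hsupc : Kc ⊔ Tc = ⊤ := by
      rw [eq_top_iff]
      rintro ⟨v, hv⟩ -
      have hv' : v ∈ K ⊔ T := by rw [hsum]; exact hv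
      obtain ⟨k, hk, t, ht, rfl⟩ := Submodule.mem_sup.mp hv'
      have h1 : (⟨k + t, hv⟩ : ↥V) = ⟨k, hKV hk⟩ + ⟨t, hTV ht⟩ := rfl
      rw [h1]
      exact Submodule.add_mem _ (Submodule.mem_sup_left hk) (Submodule.mem_sup_right ht)
    haveI hssK : IsSemisimpleModule R ↥K := by
      have h1 := IsSemisimpleModule.range (f ∘ₗ A.subtype)
      have he : LinearMap.range (f ∘ₗ A.subtype) = K := by
        rw [LinearMap.range_comp, Submodule.range_subtype]
      rwa [he] at h1
    haveI hssKc : IsSemisimpleModule R ↥Kc :=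
      IsSemisimpleModule.congr (Submodule.comapSubtypeEquivOfLe hKV)
    have hmapKc : Submodule.map Tc.mkQ Kc = ⊤ := by
      have h1 : Submodule.map Tc.mkQ (Kc ⊔ Tc) = ⊤ := by
        rw [hsupc, Submodule.map_top, Submodule.range_mkQ]
      rw [Submodule.map_sup] at h1
      have h2 : Submodule.map Tc.mkQ Tc = ⊥ := by
        rw [eq_bot_iff]
        rintro _ ⟨z, hz, rfl⟩
        rw [Submodule.mem_bot, Submodule.mkQ_apply, Submodule.Quotient.mk_eq_zero]
        exact hz
      rwa [h2, sup_bot_eq] at h1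
    haveI hssQt : IsSemisimpleModule R (↥V ⧸ Tc) := by
      have hsurj2 : Function.Surjective (Tc.mkQ ∘ₗ Kc.subtype) := by
        intro z
        have h1 : z ∈ Submodule.map Tc.mkQ Kc := by rw [hmapKc]; trivial
        obtain ⟨w, hw, rfl⟩ := h1
        exact ⟨⟨w, hw⟩, rfl⟩
      haveI h3 : IsSemisimpleModule R ↥(⊤ : Submodule R (↥V ⧸ Tc)) := by
        have h5 := IsSemisimpleModule.range (Tc.mkQ ∘ₗ Kc.subtype)
        rwa [LinearMap.range_eq_top.mpr hsurj2] at h5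
      exact IsSemisimpleModule.congr Submodule.topEquiv.symm
    have hTcrad : moduleRad R ↥V ≤ Tc := by
      intro z hz
      have h1 : Tc.mkQ z ∈ moduleRad R (↥V ⧸ Tc) := map_moduleRad_le Tc.mkQ ⟨z, hz, rfl⟩
      rw [moduleRad_eq_bot, Submodule.mem_bot, Submodule.mkQ_apply,
        Submodule.Quotient.mk_eq_zero] at h1
      exact h1
    have hKcrad : Kc ≤ moduleRad R ↥V := by
      rintro ⟨v, hv⟩ hk
      have hvK : v ∈ K := hk
      have h1 : pV v ∈ moduleRad R ↥V := map_moduleRad_le pV ⟨v, hKrad hvK, rfl⟩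
      have h2 : pV v = ⟨v, hv⟩ :=
        Submodule.linearProjOfIsCompl_apply_left hVcompl.symm ⟨v, hv⟩
      rwa [h2] at h1
    have hTctop : Tc = ⊤ := by
      rw [← hsupc, sup_eq_right.mpr (le_trans hKcrad hTcrad)]
    apply le_antisymm hTV
    intro v hv
    have h1 : (⟨v, hv⟩ : ↥V) ∈ Tc := by rw [hTctop]; trivial
    exact h1
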